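/- Every surjection f : {1,…,m} → {1,…,n} admits a unique decomposition f = s ∘ α, where s : {1,…,m} → {1,…,n} is an order-preserving (monotone) surjection and α is a permutation of {1,…,m} whose restriction to each fiber f⁻¹(i) (i = 1,…,n) is strictly increasing. -/

import Mathlib

/-- Every surjection `f : Fin m → Fin n` admits a unique decomposition
`f = s ∘ α`, where `s` is an order-preserving (monotone) surjection and `α` is a
permutation of `Fin m` whose restriction to each fiber `f ⁻¹' {i}` is strictly
increasing. -/
theorem stmt0 {m n : ℕ} (f : Fin m → Fin n) (hf : Function.Surjective f) :
    ∃! p : (Fin m → Fin n) × Equiv.Perm (Fin m),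
      Monotone p.1 ∧ Function.Surjective p.1 ∧
      (∀ i : Fin n, StrictMonoOn (⇑p.2) (f ⁻¹' {i})) ∧
      f = p.1 ∘ ⇑p.2 := by
  have key := (Tuple.eq_sort_iff (f := f) (σ := Tuple.sort f)).mp rfl
  refine ⟨(f ∘ Tuple.sort f, (Tuple.sort f)⁻¹), ⟨Tuple.monotone_sort f, ?_, ?_, ?_⟩, ?_⟩
  · exact hf.comp (Equiv.surjective _)
  · intro i a ha b hb hab
    simp only [Set.mem_preimage, Set.mem_singleton_iff] at ha hb
    rcases lt_trichotomy ((Tuple.sort f)⁻¹ a) ((Tuple.sort f)⁻¹ b) with h | h | h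
    · exact h
    · exact absurd ((Tuple.sort f)⁻¹.injective h) hab.ne
    · have := key.2 _ _ h (by simp [ha, hb])
      simp only [Equiv.Perm.inv_def, Equiv.apply_symm_apply] at this
      exact absurd this hab.asymm
  · ext x; simp
  · rintro ⟨s, α⟩ ⟨hmono, hsurj, hfib, hcomp⟩
    have hαinv : α⁻¹ = Tuple.sort f := by
      rw [Tuple.eq_sort_iff]
      constructor
      · have hfs : f ∘ ⇑α⁻¹ = s := by ext x; rw [hcomp]; simp
        rw [hfs]; exact hmono
      · intro i j hij hfij
        rcases lt_trichotomy (α⁻¹ i) (α⁻¹ j) with h | h | h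
        · exact h
        · exact absurd (α⁻¹.injective h) hij.ne
        · have := hfib (f (α⁻¹ j)) (Set.mem_preimage.2 (by simp))
            (Set.mem_preimage.2 (by simpa using hfij)) h
          simp only [Equiv.Perm.inv_def, Equiv.apply_symm_apply] at this
          exact absurd this hij.asymm
    have hα : α = (Tuple.sort f)⁻¹ := by rw [← hαinv]; simp
    have hs : s = f ∘ Tuple.sort f := by
      funext x
      have h1 := congrFun hcomp (Tuple.sort f x)
      simp only [Function.comp_apply, hα, Equiv.Perm.inv_def, Equiv.symm_apply_apply] at h1
      exact h1.symm
    rw [Prod.mk.injEq]; exact ⟨hs, hα⟩
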